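/- Let $K \subset \mathbb{R}^\ell$ be compact and convex, $j : K \to \mathbb{R}$ continuous, and $(j_h)$ a family of continuous functions on $K$ satisfying: $v_h \to v$ implies $j_h(v_h) \to j(v)$. Suppose $u^* \in K$ is a strict local minimum of $j$ on $K$, i.e. there is $\delta > 0$ such that $u^*$ is the unique minimizer of $j$ on $K \cap \overline{B}_\delta(u^*)$. Then for all sufficiently small $h$, $j_h$ attains a local minimum $u_h^*$ on $K$ with $u_h^* \in \mathrm{int}\, \overline{B}_\delta(u^*)$, and $u_h^* \to u^*$ and $j_h(u_h^*) \to j(u^*)$ as $h \to 0$. -/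

import Mathlib

open Filter Topology Metric


private noncomputable def auxSeq (g : ℝ → ℝ) : ℕ → ℝ
  | 0 => g 1
  | n+1 => g (min (auxSeq g n) (1/(n+1)))

lemma exists_strictAnti_seq {P : ℝ → Prop}
    (h : ∀ b > (0:ℝ), ∃ x, 0 < x ∧ x < b ∧ P x) :
    ∃ t : ℕ → ℝ, StrictAnti t ∧ (∀ n, 0 < t n) ∧ (∀ n, P (t n)) ∧
      Tendsto t atTop (𝓝 0) := by
  choose! g hg0 hgb hgP using h
  set t : ℕ → ℝ := auxSeq g with ht
  have hpos : ∀ n, 0 < t n := by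
    intro n; induction n with
    | zero => exact hg0 1 one_pos
    | succ n ih => exact hg0 _ (lt_min ih (by positivity))
  have hlt : ∀ n, t (n+1) < min (t n) (1/(n+1)) :=
    fun n => hgb _ (lt_min (hpos n) (by positivity))
  have hanti : StrictAnti t :=
    strictAnti_nat_of_succ_lt fun n => (hlt n).trans_le (min_le_left _ _)
  have hP : ∀ n, P (t n) := by
    intro n; cases n with
    | zero => exact hgP 1 one_pos
    | succ n => exact hgP _ (lt_min (hpos n) (by positivity))
  refine ⟨t, hanti, hpos, hP, ?_⟩
  apply squeeze_zero' (Eventually.of_forall fun n => (hpos n).le)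
    (g := fun n : ℕ => 1/(n:ℝ)) ?_ tendsto_one_div_atTop_nhds_zero_nat
  filter_upwards [eventually_ge_atTop 1] with n hn
  obtain ⟨m, rfl⟩ := Nat.exists_eq_add_of_le hn
  calc t (1 + m) ≤ t (m + 1) := by rw [Nat.add_comm]
    _ ≤ 1/(m+1:ℝ) := ((hlt m).trans_le (min_le_right _ _)).le
    _ = 1/((1+m : ℕ):ℝ) := by push_cast; ring_nf

open Filter Topology Metric

lemma seq_lim {ℓ : ℕ} {K : Set (EuclideanSpace ℝ (Fin ℓ))}
    {j : EuclideanSpace ℝ (Fin ℓ) → ℝ} {jh : ℝ → EuclideanSpace ℝ (Fin ℓ) → ℝ}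
    (hconv : ∀ v ∈ K, ∀ vh : ℝ → EuclideanSpace ℝ (Fin ℓ),
      (∀ h > (0 : ℝ), vh h ∈ K) → Tendsto vh (𝓝[>] (0 : ℝ)) (𝓝 v) →
      Tendsto (fun h => jh h (vh h)) (𝓝[>] (0 : ℝ)) (𝓝 (j v)))
    (s : ℕ → ℝ) (hsa : StrictAnti s) (hs0 : ∀ n, 0 < s n)
    (hst : Tendsto s atTop (𝓝 0))
    (v : ℕ → EuclideanSpace ℝ (Fin ℓ)) (hvK : ∀ n, v n ∈ K)
    (vb : EuclideanSpace ℝ (Fin ℓ)) (hvb : vb ∈ K)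
    (hv : Tendsto v atTop (𝓝 vb)) :
    Tendsto (fun n => jh (s n) (v n)) atTop (𝓝 (j vb)) := by
  set m : ℝ → ℕ := fun h => sInf {k | s k ≤ h} with hm
  have hne : ∀ h : ℝ, 0 < h → {k | s k ≤ h}.Nonempty := by
    intro h hh
    obtain ⟨k, hk⟩ := (hst.eventually (gt_mem_nhds hh)).exists
    exact ⟨k, hk.le⟩
  have hmem : ∀ h : ℝ, 0 < h → s (m h) ≤ h := fun h hh => Nat.sInf_mem (hne h hh)
  have hmn : ∀ n, m (s n) = n := by
    intro n
    refine le_antisymm (Nat.sInf_le (by simp : n ∈ {k | s k ≤ s n})) ?_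
    by_contra hc
    push_neg at hc
    exact absurd (hmem (s n) (hs0 n)) (not_le.mpr (hsa hc))
  have hmt : Tendsto m (𝓝[>] (0:ℝ)) atTop := by
    rw [Filter.tendsto_atTop]
    intro N
    filter_upwards [Ioo_mem_nhdsGT_of_mem ⟨le_refl (0:ℝ), hs0 N⟩] with h hh
    by_contra hc
    push_neg at hc
    exact absurd ((hsa.antitone hc.le).trans (hmem h hh.1)) (not_le.mpr hh.2)
  have hw : Tendsto (fun h => v (m h)) (𝓝[>] (0:ℝ)) (𝓝 vb) := hv.comp hmt
  have hA := hconv vb hvb (fun h => v (m h)) (fun h _ => hvK _) hw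
  have hssub : Tendsto s atTop (𝓝[>] (0:ℝ)) :=
    tendsto_nhdsWithin_of_tendsto_nhds_of_eventually_within _ hst
      (Eventually.of_forall hs0)
  have hB := hA.comp hssub
  have : ((fun h => jh h (v (m h))) ∘ s) = fun n => jh (s n) (v n) := by
    funext n; simp [Function.comp, hmn n]
  rwa [this] at hB

theorem convergence_of_local_discrete_solutions (ℓ : ℕ)
    (K : Set (EuclideanSpace ℝ (Fin ℓ))) (hKcpt : IsCompact K) (hKconv : Convex ℝ K)
    (j : EuclideanSpace ℝ (Fin ℓ) → ℝ) (hj : ContinuousOn j K)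
    (jh : ℝ → EuclideanSpace ℝ (Fin ℓ) → ℝ)
    (hjh : ∀ h > (0 : ℝ), ContinuousOn (jh h) K)
    (hconv : ∀ v ∈ K, ∀ vh : ℝ → EuclideanSpace ℝ (Fin ℓ),
      (∀ h > (0 : ℝ), vh h ∈ K) → Tendsto vh (𝓝[>] (0 : ℝ)) (𝓝 v) →
      Tendsto (fun h => jh h (vh h)) (𝓝[>] (0 : ℝ)) (𝓝 (j v)))
    (u_star : EuclideanSpace ℝ (Fin ℓ)) (hu : u_star ∈ K) (δ : ℝ) (hδ : 0 < δ)
    (hstrict : ∀ u ∈ K ∩ closedBall u_star δ, u ≠ u_star → j u_star < j u) :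
    ∃ uh : ℝ → EuclideanSpace ℝ (Fin ℓ), ∃ h₀ > (0 : ℝ),
      (∀ h, 0 < h → h < h₀ →
        uh h ∈ K ∧ ‖uh h - u_star‖ < δ ∧ IsLocalMinOn (jh h) K (uh h)) ∧
      Tendsto uh (𝓝[>] (0 : ℝ)) (𝓝 u_star) ∧
      Tendsto (fun h => jh h (uh h)) (𝓝[>] (0 : ℝ)) (𝓝 (j u_star)) := by
  classical
  set S : Set (EuclideanSpace ℝ (Fin ℓ)) := K ∩ closedBall u_star δ with hS
  have hScpt : IsCompact S := hKcpt.inter_right isClosed_closedBall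
  have huS : u_star ∈ S := ⟨hu, mem_closedBall_self hδ.le⟩
  have hmin : ∀ h : ℝ, 0 < h → ∃ x, x ∈ S ∧ ∀ y ∈ S, jh h x ≤ jh h y := by
    intro h hh
    obtain ⟨x, hx, hxmin⟩ := hScpt.exists_isMinOn ⟨_, huS⟩
      ((hjh h hh).mono Set.inter_subset_left)
    exact ⟨x, hx, fun y hy => hxmin hy⟩
  choose! uh huhS huhmin using hmin
  -- convergence of the minimizers
  have htend : Tendsto uh (𝓝[>] (0:ℝ)) (𝓝 u_star) := by
    rw [Metric.tendsto_nhds]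
    intro ε hε
    by_contra hcon
    rw [Filter.not_eventually] at hcon
    have hfreq : ∀ b > (0:ℝ), ∃ x, 0 < x ∧ x < b ∧ ε ≤ dist (uh x) u_star := by
      intro b hb
      obtain ⟨x, hx, hpx⟩ := ((nhdsGT_basis (0:ℝ)).frequently_iff.mp hcon) b hb
      exact ⟨x, hx.1, hx.2, not_lt.mp hpx⟩
    obtain ⟨t, htanti, htpos, htP, ht0⟩ := exists_strictAnti_seq hfreq
    obtain ⟨vb, hvbS, φ, hφ, hvconv⟩ :=
      hScpt.tendsto_subseq (fun n => huhS (t n) (htpos n))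
    have hsA : StrictAnti (t ∘ φ) := htanti.comp_strictMono hφ
    have hs0 : ∀ n, 0 < (t ∘ φ) n := fun n => htpos _
    have hst0 : Tendsto (t ∘ φ) atTop (𝓝 0) := ht0.comp hφ.tendsto_atTop
    have hA : Tendsto (fun k => jh ((t ∘ φ) k) (uh (t (φ k)))) atTop (𝓝 (j vb)) :=
      seq_lim hconv (t ∘ φ) hsA hs0 hst0 (fun k => uh (t (φ k)))
        (fun k => (huhS (t (φ k)) (htpos _)).1) vb hvbS.1 hvconv
    have hsub : Tendsto (t ∘ φ) atTop (𝓝[>] (0:ℝ)) :=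
      tendsto_nhdsWithin_of_tendsto_nhds_of_eventually_within _ hst0
        (Eventually.of_forall hs0)
    have hB : Tendsto (fun k => jh ((t ∘ φ) k) u_star) atTop (𝓝 (j u_star)) :=
      (hconv u_star hu (fun _ => u_star) (fun _ _ => hu) tendsto_const_nhds).comp hsub
    have hle : j vb ≤ j u_star :=
      le_of_tendsto_of_tendsto' hA hB
        (fun k => huhmin (t (φ k)) (htpos _) u_star huS)
    have hdist : ε ≤ dist vb u_star := by
      have hd : Tendsto (fun k => dist (uh (t (φ k))) u_star) atTop
          (𝓝 (dist vb u_star)) := hvconv.dist tendsto_const_nhds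
      exact ge_of_tendsto hd (Eventually.of_forall fun k => htP (φ k))
    have hne : vb ≠ u_star := by
      intro hvb
      rw [hvb, dist_self] at hdist
      exact absurd hdist (not_le.mpr hε)
    exact absurd hle (not_le.mpr (hstrict vb hvbS hne))
  -- eventually inside the ball
  have hball : ∀ᶠ h in 𝓝[>] (0:ℝ), dist (uh h) u_star < δ :=
    (Metric.tendsto_nhds.mp htend) δ hδ
  obtain ⟨h₀, hh₀, hIoo⟩ := (nhdsGT_basis (0:ℝ)).eventually_iff.mp hball
  refine ⟨uh, h₀, hh₀, fun h hh hhh₀ => ?_, htend,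
    hconv u_star hu uh (fun h hh => (huhS h hh).1) htend⟩
  have hdlt : dist (uh h) u_star < δ := hIoo ⟨hh, hhh₀⟩
  refine ⟨(huhS h hh).1, by rwa [← dist_eq_norm], ?_⟩
  have hmemnhds : closedBall u_star δ ∈ 𝓝 (uh h) :=
    closedBall_mem_nhds_of_mem hdlt
  filter_upwards [mem_nhdsWithin_of_mem_nhds hmemnhds, self_mem_nhdsWithin]
    with x hx1 hx2
  exact huhmin h hh x ⟨hx2, hx1⟩
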